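/- (Proposition 2.2.) Let P be a positive integer, D ⊆ ZMod P, A a positive real, n₀ an integer, and b ∈ ℂ. Define the pilot X : ZMod P → ℂ by X[q] = A · exp(2πi·n₀·q/P) (well defined since the exponent depends only on n₀·q mod P), and its IQ-imbalanced version X^IQ[q] = X[q] + b · conj(X[−q]). Then for every integer k ≥ 0 and every p ∈ ZMod P, the (2k+1)-th IMD nonlinear basis built from X^IQ over D satisfies S_{2k+1}[p] = |Q_{2k+1}(D, p)| · A^{2k+1} · |1 + b|^{2k} · (1 + b) · exp(2πi·n₀·p/P). -/

import Mathlib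

open Finset Complex

/-- The IMD index set `Q_{2k+1}(D, p)`: tuples `(q_1, …, q_{2k+1}) ∈ D^{2k+1}` such that
`q_1 + ⋯ + q_{k+1} − (q_{k+2} + ⋯ + q_{2k+1}) = p` in `ZMod P`. -/
def imdSet (P : ℕ) [NeZero P] (D : Finset (ZMod P)) (k : ℕ) (p : ZMod P) :
    Finset (Fin (2 * k + 1) → ZMod P) :=
  Finset.univ.filter fun q =>
    (∀ i, q i ∈ D) ∧
      ((∑ i : Fin (2 * k + 1), if (i : ℕ) < k + 1 then q i else 0) -
        ∑ i : Fin (2 * k + 1), if (i : ℕ) < k + 1 then 0 else q i) = p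

/-- The `(2k+1)`-th IMD nonlinear basis over `D` built from a signal `X`. -/
noncomputable def imdBasis (P : ℕ) [NeZero P] (D : Finset (ZMod P)) (X : ZMod P → ℂ)
    (k : ℕ) (p : ZMod P) : ℂ :=
  ∑ q ∈ imdSet P D k p, ∏ i : Fin (2 * k + 1),
    if (i : ℕ) < k + 1 then X (q i) else (starRingEnd ℂ) (X (q i))

/-- `exp(2πi·n₀·t/P)` for `t : ZMod P`; well defined since only `n₀·t mod P` enters. -/
noncomputable def eChar (P : ℕ) [NeZero P] (n₀ : ℤ) (t : ZMod P) : ℂ :=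
  Complex.exp (2 * Real.pi * Complex.I * ((((n₀ : ZMod P) * t).val : ℕ) : ℂ) / P)

lemma eChar_pow (P : ℕ) [NeZero P] (n₀ : ℤ) (t : ZMod P) :
    eChar P n₀ t = Complex.exp (2 * Real.pi * Complex.I / P) ^ ((n₀ : ZMod P) * t).val := by
  rw [eChar, ← Complex.exp_nat_mul]
  congr 1
  ring

lemma zeta_pow (P : ℕ) [NeZero P] :
    Complex.exp (2 * Real.pi * Complex.I / P) ^ P = 1 := by
  rw [← Complex.exp_nat_mul, mul_div_assoc', mul_div_cancel_left₀, Complex.exp_two_pi_mul_I]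
  exact_mod_cast (NeZero.ne P)

lemma eChar_zero (P : ℕ) [NeZero P] (n₀ : ℤ) : eChar P n₀ 0 = 1 := by
  rw [eChar_pow]
  simp

lemma eChar_add (P : ℕ) [NeZero P] (n₀ : ℤ) (s t : ZMod P) :
    eChar P n₀ (s + t) = eChar P n₀ s * eChar P n₀ t := by
  rw [eChar_pow, eChar_pow, eChar_pow, ← pow_add, mul_add, ZMod.val_add]
  exact (pow_eq_pow_mod _ (zeta_pow P)).symm

lemma conj_eChar (P : ℕ) [NeZero P] (n₀ : ℤ) (t : ZMod P) :
    (starRingEnd ℂ) (eChar P n₀ t) = eChar P n₀ (-t) := by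
  have h2 : (starRingEnd ℂ) (eChar P n₀ t) = (eChar P n₀ t)⁻¹ := by
    rw [eChar, ← Complex.exp_conj, ← Complex.exp_neg]
    congr 1
    simp only [map_div₀, map_mul, Complex.conj_I, Complex.conj_ofReal,
      Complex.conj_natCast, map_ofNat]
    ring
  rw [h2]
  refine inv_eq_of_mul_eq_one_right ?_
  rw [← eChar_add, add_neg_cancel, eChar_zero]

lemma eChar_sum (P : ℕ) [NeZero P] (n₀ : ℤ) {ι : Type*} (s : Finset ι) (f : ι → ZMod P) :
    eChar P n₀ (∑ i ∈ s, f i) = ∏ i ∈ s, eChar P n₀ (f i) := by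
  induction s using Finset.cons_induction with
  | empty => simp [eChar_zero]
  | cons a s ha ih => rw [Finset.sum_cons, Finset.prod_cons, eChar_add, ih]

lemma card_lt_filter (n m : ℕ) (h : m ≤ n) :
    (Finset.univ.filter fun i : Fin n => (i:ℕ) < m).card = m := by
  have : (Finset.univ.filter fun i : Fin n => (i:ℕ) < m) =
      (Finset.range m).attachFin (fun x hx => lt_of_lt_of_le (Finset.mem_range.mp hx) h) := by
    ext i
    simp [Finset.mem_attachFin]
  rw [this, Finset.card_attachFin, Finset.card_range]

/-- Proposition 2.2: for the pilot `X[q] = A·exp(2πi·n₀·q/P)` with IQ-imbalanced version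
`X^IQ[q] = X[q] + b·conj(X[−q])`, the `(2k+1)`-th IMD nonlinear basis satisfies
`S_{2k+1}[p] = |Q_{2k+1}(D, p)| · A^{2k+1} · |1 + b|^{2k} · (1 + b) · exp(2πi·n₀·p/P)`. -/
theorem imdBasis_pilot (P : ℕ) [NeZero P] (D : Finset (ZMod P))
    (A : ℝ) (hA : 0 < A) (n₀ : ℤ) (b : ℂ)
    (X XIQ : ZMod P → ℂ)
    (hX : ∀ q : ZMod P, X q = (A : ℂ) * eChar P n₀ q)
    (hXIQ : ∀ q : ZMod P, XIQ q = X q + b * (starRingEnd ℂ) (X (-q)))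
    (k : ℕ) (p : ZMod P) :
    imdBasis P D XIQ k p =
      ((imdSet P D k p).card : ℂ) * (A : ℂ) ^ (2 * k + 1) *
        ((‖1 + b‖ : ℝ) : ℂ) ^ (2 * k) * (1 + b) * eChar P n₀ p := by
  have hXIQ' : ∀ q, XIQ q = ((A : ℂ) * (1 + b)) * eChar P n₀ q := by
    intro q
    rw [hXIQ, hX, hX, map_mul, conj_eChar, neg_neg, Complex.conj_ofReal]
    ring
  have hconj : ∀ q, (starRingEnd ℂ) (XIQ q)
      = ((A : ℂ) * (starRingEnd ℂ) (1 + b)) * eChar P n₀ (-q) := by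
    intro q
    rw [hXIQ' q, map_mul, map_mul, conj_eChar, Complex.conj_ofReal]
  have key : ∀ q ∈ imdSet P D k p,
      (∏ i : Fin (2*k+1), if (i:ℕ) < k+1 then XIQ (q i) else (starRingEnd ℂ) (XIQ (q i)))
      = (A:ℂ)^(2*k+1) * ((1+b)^(k+1) * (starRingEnd ℂ) (1+b)^k) * eChar P n₀ p := by
    intro q hq
    rw [imdSet, Finset.mem_filter] at hq
    obtain ⟨-, -, hsum⟩ := hq
    have step : ∀ i : Fin (2*k+1),
        (if (i:ℕ) < k+1 then XIQ (q i) else (starRingEnd ℂ) (XIQ (q i)))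
        = (if (i:ℕ) < k+1 then (A:ℂ)*(1+b) else (A:ℂ)*(starRingEnd ℂ) (1+b))
          * eChar P n₀ (if (i:ℕ) < k+1 then q i else -(q i)) := by
      intro i
      split
      · rw [hXIQ']
      · rw [hconj]
    rw [Finset.prod_congr rfl fun i _ => step i, Finset.prod_mul_distrib, ← eChar_sum]
    have hsum2 : (∑ i : Fin (2*k+1), if (i:ℕ) < k+1 then q i else -(q i)) = p := by
      rw [← hsum, ← Finset.sum_sub_distrib]
      refine Finset.sum_congr rfl fun i _ => ?_
      split <;> simp
    rw [hsum2, Finset.prod_ite, Finset.prod_const, Finset.prod_const]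
    have h1 : (Finset.univ.filter fun i : Fin (2*k+1) => (i:ℕ) < k+1).card = k+1 :=
      card_lt_filter _ _ (by omega)
    have h2 : (Finset.univ.filter fun i : Fin (2*k+1) => ¬ (i:ℕ) < k+1).card = k := by
      have := Finset.card_filter_add_card_filter_not
        (s := (Finset.univ : Finset (Fin (2*k+1)))) (p := fun i => (i:ℕ) < k+1)
      simp only [Finset.card_univ, Fintype.card_fin] at this
      omega
    rw [h1, h2, mul_pow, mul_pow]
    ring
  rw [imdBasis, Finset.sum_congr rfl key, Finset.sum_const, nsmul_eq_mul]
  have habs : ((‖1+b‖ : ℝ) : ℂ)^(2*k) * (1+b)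
      = (1+b)^(k+1) * (starRingEnd ℂ) (1+b)^k := by
    have hsq : ((‖1+b‖ : ℝ) : ℂ)^2 = (1+b) * (starRingEnd ℂ) (1+b) := by
      rw [Complex.mul_conj]
      norm_cast
      exact Complex.sq_norm _
    rw [pow_mul, hsq, mul_pow]
    ring
  linear_combination -((((imdSet P D k p).card : ℂ)) * (A:ℂ)^(2*k+1) * eChar P n₀ p) * habs
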